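/- arXiv:2412.21021 — 2 statements merged into one kernel-verified Lean document; each statement's English description precedes it below -/
import Mathlib

section
/- Let G = (V,E) be a graph on n vertices such that, for some integer k with 2 ≤ k ≤ n/2, α(F_k(G)) = α(G). Let u, v ∈ V be distinct nonadjacent vertices and let G + uv be the graph obtained from G by adding the edge uv. If α(G + uv) = α(G), then α(F_k(G + uv)) = α(G + uv). -/
open Matrix

attribute [local instance] Classical.propDecidable

/-- The Laplacian matrix `L(G) = D(G) - A(G)` of a simple graph, over `ℝ`. -/
noncomputable def lapMat {V : Type*} [Fintype V] (G : SimpleGraph V) : Matrix V V ℝ :=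
  fun u w =>
    (if u = w then ∑ x : V, (if G.Adj u x then (1 : ℝ) else 0) else 0)
      - (if G.Adj u w then (1 : ℝ) else 0)

/-- The smallest eigenvalue of a symmetric real matrix, as the infimum of Rayleigh quotients. -/
noncomputable def lambdaMin {m : Type*} [Fintype m] (M : Matrix m m ℝ) : ℝ :=
  sInf {t : ℝ | ∃ x : m → ℝ, x ≠ 0 ∧ (x ⬝ᵥ (M *ᵥ x)) / (x ⬝ᵥ x) = t}

/-- The algebraic connectivity `α(G)`: the second smallest Laplacian eigenvalue, characterized
as the minimum Rayleigh quotient over nonzero vectors orthogonal to the all-ones vector. -/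
noncomputable def algConn {V : Type*} [Fintype V] (G : SimpleGraph V) : ℝ :=
  sInf {t : ℝ | ∃ x : V → ℝ, x ≠ 0 ∧ (∑ v, x v) = 0 ∧
    (x ⬝ᵥ ((lapMat G) *ᵥ x)) / (x ⬝ᵥ x) = t}

/-- A Fiedler vector: an eigenvector of `L(G)` for the eigenvalue `α(G)`. -/
noncomputable def IsFiedlerVector {V : Type*} [Fintype V] (G : SimpleGraph V) (x : V → ℝ) : Prop :=
  x ≠ 0 ∧ (lapMat G) *ᵥ x = algConn G • x

/-- The `k`-token graph of `G`: vertices are the `k`-subsets of the vertex set, two subsets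
being adjacent iff their symmetric difference is a pair `{u, v}` with `uv` an edge of `G`. -/
def tokenGraph {V : Type*} [DecidableEq V] (G : SimpleGraph V) (k : ℕ) :
    SimpleGraph {A : Finset V // A.card = k} where
  Adj A B := ∃ u v : V, G.Adj u v ∧ symmDiff A.val B.val = {u, v}
  symm := by
    constructor
    rintro A B ⟨u, v, h, hs⟩
    exact ⟨u, v, h, by rwa [symmDiff_comm]⟩
  loopless := by
    constructor
    rintro A ⟨u, v, h, hs⟩
    rw [symmDiff_self] at hs
    have : u ∈ (⊥ : Finset V) := hs ▸ Finset.mem_insert_self u {v}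
    simp at this

/-- Adding the edge `uv` to `G`. -/
def addEdge {V : Type*} (G : SimpleGraph V) (u v : V) : SimpleGraph V :=
  G ⊔ SimpleGraph.fromEdgeSet {s(u, v)}

/-- Degree of a vertex. -/
noncomputable def deg {V : Type*} [Fintype V] (G : SimpleGraph V) (u : V) : ℕ :=
  (Finset.univ.filter (fun w => G.Adj u w)).card

/-- The smallest eigenvalue of the principal submatrix of `M` with rows and columns in `S`. -/
noncomputable def principalMin {V : Type*} [Fintype V] (M : Matrix V V ℝ) (S : Finset V) : ℝ :=
  lambdaMin (M.submatrix (fun a : {x // x ∈ S} => (a : V)) (fun a : {x // x ∈ S} => (a : V)))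

/-- The cycle on `Fin n` (for `n ≥ 3`), `i` adjacent to `i ± 1 (mod n)`. -/
def cyc (n : ℕ) : SimpleGraph (Fin n) :=
  SimpleGraph.fromRel (fun i j => (i.val + 1) % n = j.val)

/-- The kite graph `K(H,T)` with head `H`, root `v`, and tail formed by `s` paths of length `r`:
`Sum.inr (i, j)` is the vertex `v_{(i+1)(j+1)}`, the `(j+1)`-st vertex of the `(i+1)`-st path
(so the first path corresponds to `i = 0` and the path vertices adjacent to `v` have `j = 0`). -/
def kite {W : Type*} (H : SimpleGraph W) (v : W) (s r : ℕ) :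
    SimpleGraph (W ⊕ Fin s × Fin r) :=
  SimpleGraph.fromRel (fun a b =>
    match a, b with
    | Sum.inl x, Sum.inl y => H.Adj x y
    | Sum.inl x, Sum.inr (_, j) => x = v ∧ j.val = 0
    | Sum.inr (i, j), Sum.inr (i', j') => i = i' ∧ j.val + 1 = j'.val
    | _, _ => False)


set_option linter.unusedSectionVars false

section Aux

variable {V : Type*} [Fintype V]

lemma lapMat_mulVec (G : SimpleGraph V) (x : V → ℝ) (u : V) :
    (lapMat G *ᵥ x) u = ∑ w, (if G.Adj u w then (x u - x w) else 0) := by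
  have h : ∀ w, (if G.Adj u w then (x u - x w) else 0)
      = (if G.Adj u w then (1:ℝ) else 0) * x u - (if G.Adj u w then (1:ℝ) else 0) * x w := by
    intro w; split <;> ring
  simp_rw [h, Finset.sum_sub_distrib, ← Finset.sum_mul]
  simp only [Matrix.mulVec, dotProduct, lapMat, sub_mul, Finset.sum_sub_distrib,
    ite_mul, zero_mul, one_mul, Finset.sum_ite_eq, Finset.mem_univ, if_true]

lemma dot_lap_eq (G : SimpleGraph V) (x : V → ℝ) :
    x ⬝ᵥ (lapMat G *ᵥ x) = (1/2) * ∑ u, ∑ w, (if G.Adj u w then (x u - x w)^2 else 0) := by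
  have key : ∀ u w, (if G.Adj u w then (x u - x w)^2 else 0)
      = (if G.Adj u w then x u * (x u - x w) else 0) + (if G.Adj w u then x w * (x w - x u) else 0) := by
    intro u w
    by_cases h : G.Adj u w
    · rw [if_pos h, if_pos h, if_pos (G.adj_symm h)]; ring
    · rw [if_neg h, if_neg h, if_neg (fun h' => h (G.adj_symm h'))]; ring
  simp_rw [key, Finset.sum_add_distrib]
  rw [Finset.sum_comm (f := fun u w => if G.Adj w u then x w * (x w - x u) else 0)]
  rw [dotProduct]
  simp_rw [lapMat_mulVec, Finset.mul_sum, mul_ite, mul_zero]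
  ring

lemma dot_lap_nonneg (G : SimpleGraph V) (x : V → ℝ) : 0 ≤ x ⬝ᵥ (lapMat G *ᵥ x) := by
  rw [dot_lap_eq]
  have : ∀ u ∈ Finset.univ, (0:ℝ) ≤ ∑ w, (if G.Adj u w then (x u - x w)^2 else 0) := by
    intro u _
    refine Finset.sum_nonneg fun w _ => ?_
    split <;> positivity
  have := Finset.sum_nonneg this
  linarith

lemma dot_lap_mono {G G' : SimpleGraph V} (h : G ≤ G') (x : V → ℝ) :
    x ⬝ᵥ (lapMat G *ᵥ x) ≤ x ⬝ᵥ (lapMat G' *ᵥ x) := by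
  rw [dot_lap_eq, dot_lap_eq]
  have : (∑ u, ∑ w, (if G.Adj u w then (x u - x w)^2 else 0))
      ≤ ∑ u, ∑ w, (if G'.Adj u w then (x u - x w)^2 else 0) := by
    refine Finset.sum_le_sum fun u _ => Finset.sum_le_sum fun w _ => ?_
    by_cases hadj : G.Adj u w
    · rw [if_pos hadj, if_pos (h hadj)]
    · rw [if_neg hadj]; split <;> positivity
  linarith

lemma sum_lap_zero (G : SimpleGraph V) (x : V → ℝ) :
    ∑ a, (lapMat G *ᵥ x) a = 0 := by
  simp_rw [lapMat_mulVec]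
  have key : ∀ u w : V, (if G.Adj u w then (x u - x w) else 0)
      = - (if G.Adj w u then (x w - x u) else 0) := by
    intro u w
    by_cases h : G.Adj u w
    · rw [if_pos h, if_pos (G.adj_symm h)]; ring
    · rw [if_neg h, if_neg (fun h' => h (G.adj_symm h'))]; ring
  have h2 : ∑ u : V, ∑ w : V, (if G.Adj u w then (x u - x w) else 0)
      = - ∑ u : V, ∑ w : V, (if G.Adj u w then (x u - x w) else 0) := by
    conv_lhs => rw [Finset.sum_comm]
    rw [Finset.sum_congr rfl (fun w _ => Finset.sum_congr rfl (fun u _ => key u w))]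
    simp [Finset.sum_neg_distrib]
  linarith


end Aux

section Aux2
def RSet {V : Type*} [Fintype V] (G : SimpleGraph V) : Set ℝ :=
  {t : ℝ | ∃ x : V → ℝ, x ≠ 0 ∧ (∑ v, x v) = 0 ∧
    (x ⬝ᵥ ((lapMat G) *ᵥ x)) / (x ⬝ᵥ x) = t}

lemma algConn_eq_RSet {V : Type*} [Fintype V] (G : SimpleGraph V) :
    algConn G = sInf (RSet G) := rfl


lemma dot_self_nonneg {V : Type*} [Fintype V] (x : V → ℝ) : 0 ≤ x ⬝ᵥ x :=
  Finset.sum_nonneg fun i _ => mul_self_nonneg (x i)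

lemma dot_self_pos {V : Type*} [Fintype V] {x : V → ℝ} (hx : x ≠ 0) : 0 < x ⬝ᵥ x :=
  lt_of_le_of_ne (dot_self_nonneg x) fun h => hx (dotProduct_self_eq_zero.mp h.symm)

lemma RSet_bddBelow {V : Type*} [Fintype V] (G : SimpleGraph V) : BddBelow (RSet G) := by
  refine ⟨0, fun t ht => ?_⟩
  obtain ⟨x, hx0, hxs, rfl⟩ := ht
  exact div_nonneg (dot_lap_nonneg G x) (dot_self_nonneg x)

lemma RSet_nonempty {V : Type*} [Fintype V] (G : SimpleGraph V)
    (hcard : 2 ≤ Fintype.card V) : (RSet G).Nonempty := by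
  obtain ⟨a, b, hab⟩ := Fintype.exists_pair_of_one_lt_card (α := V) (by omega)
  classical
  set x : V → ℝ := fun w => (if w = a then (1:ℝ) else 0) - (if w = b then 1 else 0) with hx
  refine ⟨_, x, ?_, ?_, rfl⟩
  · intro h
    have : x a = 0 := congrFun h a
    simp [hx, hab] at this
  · simp [hx, Finset.sum_sub_distrib]

lemma algConn_mono {V : Type*} [Fintype V] {G G' : SimpleGraph V} (h : G ≤ G')
    (hne : (RSet G').Nonempty) : algConn G ≤ algConn G' := by
  rw [algConn_eq_RSet, algConn_eq_RSet]
  refine le_csInf hne ?_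
  rintro t ⟨x, hx0, hxs, rfl⟩
  have h1 : algConn G ≤ (x ⬝ᵥ (lapMat G *ᵥ x)) / (x ⬝ᵥ x) :=
    csInf_le (RSet_bddBelow G) ⟨x, hx0, hxs, rfl⟩
  have h2 : (x ⬝ᵥ (lapMat G *ᵥ x)) / (x ⬝ᵥ x) ≤ (x ⬝ᵥ (lapMat G' *ᵥ x)) / (x ⬝ᵥ x) :=
    div_le_div_of_nonneg_right (dot_lap_mono h x) (dot_self_nonneg x)
  exact le_trans (by rw [algConn_eq_RSet] at h1; exact h1) h2

end Aux2

section Aux3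
variable {V : Type*} [Fintype V] [DecidableEq V]

lemma card_supersets (T : Finset V) (k : ℕ) (hT : T.card ≤ k) :
    ((Finset.univ.powersetCard k (α := V)).filter (fun A => T ⊆ A)).card
      = (Fintype.card V - T.card).choose (k - T.card) := by
  have hcard : (Finset.univ \ T).card = Fintype.card V - T.card := by
    rw [Finset.card_sdiff_of_subset (Finset.subset_univ T), Finset.card_univ]
  rw [← hcard, ← Finset.card_powersetCard (k - T.card) (Finset.univ \ T)]
  apply Finset.card_nbij' (i := fun A => A \ T) (j := fun A => A ∪ T)
  · intro A hA
    simp only [Finset.mem_coe, Finset.mem_filter, Finset.mem_powersetCard_univ] at hA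
    rw [Finset.mem_coe, Finset.mem_powersetCard]
    exact ⟨Finset.sdiff_subset_sdiff (Finset.subset_univ A) le_rfl,
      by rw [Finset.card_sdiff_of_subset hA.2, hA.1]⟩
  · intro A hA
    rw [Finset.mem_coe, Finset.mem_powersetCard] at hA
    have hdisj : Disjoint A T := by
      have := hA.1
      intro s hs1 hs2
      intro a ha
      have := hs1 ha
      have h2 := hs2 ha
      have := hA.1 this
      simp only [Finset.mem_sdiff] at this
      exact absurd h2 this.2
    simp only [Finset.mem_coe, Finset.mem_filter, Finset.mem_powersetCard_univ]
    constructor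
    · rw [Finset.card_union_of_disjoint hdisj, hA.2]; omega
    · exact Finset.subset_union_right
  · intro A hA
    simp only [Finset.mem_coe, Finset.mem_filter] at hA
    exact Finset.sdiff_union_of_subset hA.2
  · intro A hA
    rw [Finset.mem_coe, Finset.mem_powersetCard] at hA
    apply Finset.union_sdiff_cancel_right
    intro s hs1 hs2 a ha
    have h1 := hA.1 (hs1 ha)
    simp only [Finset.mem_sdiff] at h1
    exact absurd (hs2 ha) h1.2

lemma count_pair (k : ℕ) (hk : 2 ≤ k) (a b : V) :
    ((Finset.univ.powersetCard k (α := V)).filter (fun A => a ∈ A ∧ b ∈ A)).card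
      = if a = b then (Fintype.card V - 1).choose (k-1) else (Fintype.card V - 2).choose (k-2) := by
  split_ifs with h
  · subst h
    have : ∀ A ∈ Finset.univ.powersetCard k (α := V), ((a ∈ A ∧ a ∈ A) ↔ ({a} : Finset V) ⊆ A) := by
      intro A _; simp
    rw [Finset.filter_congr this, card_supersets {a} k (by simpa using hk.trans' one_le_two)]
    simp
  · have hT : ({a, b} : Finset V).card = 2 := by
      rw [Finset.card_insert_of_notMem (by simpa using h), Finset.card_singleton]
    have : ∀ A ∈ Finset.univ.powersetCard k (α := V), ((a ∈ A ∧ b ∈ A) ↔ ({a, b} : Finset V) ⊆ A) := by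
      intro A _; simp [Finset.insert_subset_iff]
    rw [Finset.filter_congr this, card_supersets {a,b} k (hT ▸ hk), hT]


lemma lift_dot (k : ℕ) (hk : 2 ≤ k) (x z : V → ℝ) :
    ∑ A : {A : Finset V // A.card = k}, (∑ a ∈ A.val, x a) * (∑ b ∈ A.val, z b)
      = (((Fintype.card V - 1).choose (k-1) : ℝ) - ((Fintype.card V - 2).choose (k-2) : ℝ))
          * (∑ a, x a * z a)
        + ((Fintype.card V - 2).choose (k-2) : ℝ) * ((∑ a, x a) * (∑ b, z b)) := by
  set C1 : ℝ := ((Fintype.card V - 1).choose (k-1) : ℝ) with hC1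
  set C2 : ℝ := ((Fintype.card V - 2).choose (k-2) : ℝ) with hC2
  have h1 : ∀ (g : V → ℝ) (A : Finset V), ∑ a ∈ A, g a = ∑ a : V, if a ∈ A then g a else 0 := by
    intro g A; rw [Finset.sum_ite_mem, Finset.univ_inter]
  rw [← Finset.sum_subtype (Finset.univ.powersetCard k)
    (fun A => Finset.mem_powersetCard_univ) (fun A => (∑ a ∈ A, x a) * (∑ b ∈ A, z b))]
  have step1 : ∀ A ∈ Finset.univ.powersetCard k (α := V),
      (∑ a ∈ A, x a) * (∑ b ∈ A, z b)
        = ∑ a : V, ∑ b : V, (if a ∈ A ∧ b ∈ A then x a * z b else 0) := by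
    intro A _
    rw [Finset.sum_mul_sum, h1 (fun a => ∑ b ∈ A, x a * z b) A]
    refine Finset.sum_congr rfl fun a _ => ?_
    by_cases ha : a ∈ A
    · rw [if_pos ha, h1 (fun b => x a * z b) A]
      refine Finset.sum_congr rfl fun b _ => ?_
      by_cases hb : b ∈ A <;> simp [ha, hb]
    · rw [if_neg ha]
      refine (Finset.sum_eq_zero fun b _ => ?_).symm
      simp [ha]
  rw [Finset.sum_congr rfl step1, Finset.sum_comm]
  have step2 : ∀ a : V, ∑ A ∈ Finset.univ.powersetCard k (α := V), ∑ b : V,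
      (if a ∈ A ∧ b ∈ A then x a * z b else 0)
      = ∑ b : V, (if a = b then C1 else C2) * (x a * z b) := by
    intro a
    rw [Finset.sum_comm]
    refine Finset.sum_congr rfl fun b _ => ?_
    rw [← Finset.sum_filter]
    rw [Finset.sum_const, nsmul_eq_mul, count_pair k hk a b]
    split_ifs with h <;> simp [hC1, hC2]
  rw [Finset.sum_congr rfl (fun a _ => step2 a)]
  have step3 : ∀ a b : V, (if a = b then C1 else C2) * (x a * z b)
      = C2 * (x a * z b) + (if a = b then (C1 - C2) * (x a * z b) else 0) := by
    intro a b; split_ifs <;> ring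
  simp_rw [step3, Finset.sum_add_distrib]
  rw [add_comm]
  congr 1
  · rw [Finset.mul_sum]
    refine Finset.sum_congr rfl fun a _ => ?_
    rw [Finset.sum_ite_eq Finset.univ a (fun b => (C1 - C2) * (x a * z b))]
    simp
  · rw [Finset.sum_mul_sum, Finset.mul_sum]
    refine Finset.sum_congr rfl fun a _ => ?_
    rw [Finset.mul_sum]


lemma antisym_sum (G : SimpleGraph V) (x : V → ℝ) (s : Finset V) :
    ∑ a ∈ s, ∑ w ∈ s, (if G.Adj a w then (x a - x w) else 0) = 0 := by
  have key : ∀ u w : V, (if G.Adj u w then (x u - x w) else 0)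
      = - (if G.Adj w u then (x w - x u) else 0) := by
    intro u w
    by_cases h : G.Adj u w
    · rw [if_pos h, if_pos (G.adj_symm h)]; ring
    · rw [if_neg h, if_neg (fun h' => h (G.adj_symm h'))]; ring
  have h2 : ∑ a ∈ s, ∑ w ∈ s, (if G.Adj a w then (x a - x w) else 0)
      = - ∑ a ∈ s, ∑ w ∈ s, (if G.Adj a w then (x a - x w) else 0) := by
    conv_lhs => rw [Finset.sum_comm]
    rw [Finset.sum_congr rfl (fun w _ => Finset.sum_congr rfl (fun u _ => key u w))]
    simp [Finset.sum_neg_distrib]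
  linarith

lemma token_lap_lift (G : SimpleGraph V) (k : ℕ) (x : V → ℝ)
    (A : {A : Finset V // A.card = k}) :
    (lapMat (tokenGraph G k) *ᵥ (fun B : {A : Finset V // A.card = k} => ∑ a ∈ B.val, x a)) A
      = ∑ a ∈ A.val, (lapMat G *ᵥ x) a := by
  rw [lapMat_mulVec]
  have hrhs : ∑ a ∈ A.val, (lapMat G *ᵥ x) a
      = ∑ p ∈ (A.val ×ˢ A.valᶜ).filter (fun p => G.Adj p.1 p.2), (x p.1 - x p.2) := by
    have : ∀ a ∈ A.val, (lapMat G *ᵥ x) a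
        = ∑ w ∈ A.val, (if G.Adj a w then (x a - x w) else 0)
          + ∑ w ∈ A.valᶜ, (if G.Adj a w then (x a - x w) else 0) := by
      intro a _
      rw [lapMat_mulVec, Finset.sum_add_sum_compl]
    rw [Finset.sum_congr rfl this, Finset.sum_add_distrib, antisym_sum, zero_add,
      Finset.sum_filter, Finset.sum_product]
  rw [hrhs]
  -- now the LHS
  rw [← Finset.sum_filter]
  symm
  refine Finset.sum_bij (i := fun p hp => (⟨insert p.2 (A.val.erase p.1), ?_⟩ :
      {A : Finset V // A.card = k})) ?_ ?_ ?_ ?_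
  · -- card
    simp only [Finset.mem_filter, Finset.mem_product, Finset.mem_compl] at hp
    rw [Finset.card_insert_of_notMem (fun h => hp.1.2 (Finset.erase_subset _ _ h)),
      Finset.card_erase_of_mem hp.1.1, A.2]
    have : 0 < k := by
      have := Finset.card_pos.mpr ⟨p.1, hp.1.1⟩
      rw [A.2] at this; exact this
    omega
  · -- maps to filter (adjacency)
    intro p hp
    simp only [Finset.mem_filter, Finset.mem_product, Finset.mem_compl] at hp
    obtain ⟨⟨hu, hv⟩, hadj⟩ := hp
    simp only [Finset.mem_filter, Finset.mem_univ, true_and]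
    refine ⟨p.1, p.2, hadj, ?_⟩
    have hne : p.1 ≠ p.2 := fun h => hv (h ▸ hu)
    ext w
    simp only [Finset.mem_symmDiff, Finset.mem_insert, Finset.mem_erase,
      Finset.mem_singleton]
    constructor
    · rintro (⟨hwA, hwB⟩ | ⟨hwB, hwA⟩)
      · left
        by_contra hne'
        exact hwB (Or.inr ⟨fun h => hne' h, hwA⟩)
      · rcases hwB with h | ⟨_, h⟩
        · exact Or.inr h
        · exact absurd h hwA
    · rintro (rfl | rfl)
      · exact Or.inl ⟨hu, fun h => by
          rcases h with h | ⟨h, _⟩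
          · exact hne h
          · exact h rfl⟩
      · exact Or.inr ⟨Or.inl rfl, hv⟩
  · -- injective
    intro p hp q hq heq
    simp only [Finset.mem_filter, Finset.mem_product, Finset.mem_compl] at hp hq
    obtain ⟨⟨hu, hv⟩, _⟩ := hp
    obtain ⟨⟨hu', hv'⟩, _⟩ := hq
    have heq' : insert p.2 (A.val.erase p.1) = insert q.2 (A.val.erase q.1) :=
      congrArg Subtype.val heq
    have hv2 : p.2 = q.2 := by
      have : p.2 ∈ insert q.2 (A.val.erase q.1) := heq' ▸ Finset.mem_insert_self _ _
      rcases Finset.mem_insert.mp this with h | h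
      · exact h
      · exact absurd (Finset.mem_of_mem_erase h) hv
    have hu2 : p.1 = q.1 := by
      by_contra hne
      have hq1 : q.1 ∈ insert p.2 (A.val.erase p.1) :=
        Finset.mem_insert_of_mem (Finset.mem_erase.mpr ⟨fun h => hne h.symm, hu'⟩)
      rw [heq'] at hq1
      rcases Finset.mem_insert.mp hq1 with h | h
      · exact hv' (h ▸ hu')
      · exact absurd h (Finset.notMem_erase _ _)
    exact Prod.ext hu2 hv2
  · -- surjective
    intro B hB
    simp only [Finset.mem_filter, Finset.mem_univ, true_and] at hB
    obtain ⟨u, v, hadj, hs⟩ := hB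
    have hmem : ∀ w, w ∈ symmDiff A.val B.val ↔ w = u ∨ w = v := by
      intro w; rw [hs]; simp
    have hBA : B.val.card = A.val.card := by rw [A.2, B.2]
    have hcore : ∀ u' v', G.Adj u' v' → (∀ w, w ∈ symmDiff A.val B.val ↔ w = u' ∨ w = v') →
        u' ∈ A.val → u' ∉ B.val →
        ∃ p, p ∈ (A.val ×ˢ A.valᶜ).filter (fun p => G.Adj p.1 p.2) ∧
          insert p.2 (A.val.erase p.1) = B.val := by
      intro u' v' hadj' hmem' huA huB
      have hne' : u' ≠ v' := hadj'.ne
      have hv' := (hmem' v').mpr (Or.inr rfl)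
      rw [Finset.mem_symmDiff] at hv'
      have hvB : v' ∈ B.val ∧ v' ∉ A.val := by
        rcases hv' with ⟨hvA, hvB⟩ | h
        · exfalso
          have hsub : B.val ⊆ A.val := by
            intro w hw
            by_contra hwA
            rcases (hmem' w).mp (Finset.mem_symmDiff.mpr (Or.inr ⟨hw, hwA⟩)) with rfl | rfl
            · exact huB hw
            · exact hvB hw
          have hEQ : B.val = A.val := Finset.eq_of_subset_of_card_le hsub (le_of_eq hBA.symm)
          have hu'' : u' ∈ symmDiff A.val B.val := (hmem' u').mpr (Or.inl rfl)
          rw [hEQ, symmDiff_self] at hu''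
          simp at hu''
        · exact h
      refine ⟨(u', v'), ?_, ?_⟩
      · simp only [Finset.mem_filter, Finset.mem_product, Finset.mem_compl]
        exact ⟨⟨huA, hvB.2⟩, hadj'⟩
      · ext w
        simp only [Finset.mem_insert, Finset.mem_erase]
        constructor
        · rintro (rfl | ⟨hwu, hwA⟩)
          · exact hvB.1
          · by_contra hwB
            rcases (hmem' w).mp (Finset.mem_symmDiff.mpr (Or.inl ⟨hwA, hwB⟩)) with rfl | rfl
            · exact hwu rfl
            · exact hvB.2 hwA
        · intro hwB
          by_cases hwA : w ∈ A.val
          · exact Or.inr ⟨fun h => huB (h ▸ hwB), hwA⟩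
          · rcases (hmem' w).mp (Finset.mem_symmDiff.mpr (Or.inr ⟨hwB, hwA⟩)) with rfl | rfl
            · exact absurd huA hwA
            · exact Or.inl rfl
    have hu' := (hmem u).mpr (Or.inl rfl)
    rw [Finset.mem_symmDiff] at hu'
    rcases hu' with ⟨huA, huB⟩ | ⟨huB, huA⟩
    · obtain ⟨p, hp, hkey⟩ := hcore u v hadj hmem huA huB
      exact ⟨p, hp, Subtype.ext hkey⟩
    · have hv' := (hmem v).mpr (Or.inr rfl)
      rw [Finset.mem_symmDiff] at hv'
      rcases hv' with ⟨hvA, hvB⟩ | ⟨hvB, hvA⟩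
      · obtain ⟨p, hp, hkey⟩ := hcore v u (G.adj_symm hadj) (fun w => by rw [hmem w]; tauto) hvA hvB
        exact ⟨p, hp, Subtype.ext hkey⟩
      · exfalso
        have hsub : A.val ⊆ B.val := by
          intro w hw
          by_contra hwB
          rcases (hmem w).mp (Finset.mem_symmDiff.mpr (Or.inl ⟨hw, hwB⟩)) with rfl | rfl
          · exact huA hw
          · exact hvA hw
        have hEQ : A.val = B.val := Finset.eq_of_subset_of_card_le hsub (le_of_eq hBA)
        have hu'' : u ∈ symmDiff A.val B.val := (hmem u).mpr (Or.inl rfl)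
        rw [hEQ, symmDiff_self] at hu''
        simp at hu''
  · -- values
    intro p hp
    simp only [Finset.mem_filter, Finset.mem_product, Finset.mem_compl] at hp
    obtain ⟨⟨hu, hv⟩, _⟩ := hp
    have h1 : ∑ a ∈ insert p.2 (A.val.erase p.1), x a
        = x p.2 + ∑ a ∈ A.val.erase p.1, x a := by
      rw [Finset.sum_insert (fun h => hv (Finset.erase_subset _ _ h))]
    have h2 : ∑ a ∈ A.val.erase p.1, x a + x p.1 = ∑ a ∈ A.val, x a :=
      Finset.sum_erase_add _ _ hu
    simp only [h1]
    linarith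


lemma coeff_eq (k : ℕ) (hk : 2 ≤ k) (hkn : 2 * k ≤ Fintype.card V) :
    (((Fintype.card V - 1).choose (k-1) : ℝ) - ((Fintype.card V - 2).choose (k-2) : ℝ))
      = ((Fintype.card V - 2).choose (k-1) : ℝ) := by
  set n := Fintype.card V
  have hn : 4 ≤ n := by omega
  have h1 : n - 1 = (n - 2) + 1 := by omega
  have h2 : k - 1 = (k - 2) + 1 := by omega
  have := Nat.choose_succ_succ (n - 2) (k - 2)
  have h3 : (k - 2) + 1 = k - 1 := by omega
  rw [h1, h2, this]
  simp only [Nat.succ_eq_add_one, h3]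
  push_cast
  ring

lemma coeff_pos (k : ℕ) (hk : 2 ≤ k) (hkn : 2 * k ≤ Fintype.card V) :
    (0:ℝ) < ((Fintype.card V - 2).choose (k-1) : ℝ) := by
  have : 0 < (Fintype.card V - 2).choose (k-1) := Nat.choose_pos (by omega)
  exact_mod_cast this

lemma lift_mem (G : SimpleGraph V) (k : ℕ) (hk : 2 ≤ k) (hkn : 2 * k ≤ Fintype.card V)
    {t : ℝ} (ht : t ∈ RSet G) : t ∈ RSet (tokenGraph G k) := by
  obtain ⟨x, hx0, hxs, rfl⟩ := ht
  set c : ℝ := ((Fintype.card V - 2).choose (k-1) : ℝ) with hc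
  have hcpos := coeff_pos k hk hkn
  set y : {A : Finset V // A.card = k} → ℝ := fun B => ∑ a ∈ B.val, x a with hy
  have hyy : y ⬝ᵥ y = c * (x ⬝ᵥ x) := by
    show (∑ A : {A : Finset V // A.card = k}, (∑ a ∈ A.val, x a) * (∑ b ∈ A.val, x b)) = _
    rw [lift_dot k hk x x, coeff_eq k hk hkn, hxs]
    show c * (∑ a, x a * x a) + _ * (0 * _) = c * ∑ a, x a * x a
    ring
  have hyL : y ⬝ᵥ (lapMat (tokenGraph G k) *ᵥ y) = c * (x ⬝ᵥ (lapMat G *ᵥ x)) := by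
    have hlift : (lapMat (tokenGraph G k) *ᵥ y)
        = fun A : {A : Finset V // A.card = k} => ∑ a ∈ A.val, (lapMat G *ᵥ x) a :=
      funext fun A => token_lap_lift G k x A
    rw [hlift]
    show (∑ A : {A : Finset V // A.card = k},
        (∑ a ∈ A.val, x a) * (∑ b ∈ A.val, (lapMat G *ᵥ x) b)) = _
    rw [lift_dot k hk x (lapMat G *ᵥ x), coeff_eq k hk hkn, hxs, sum_lap_zero]
    show c * (∑ a, x a * (lapMat G *ᵥ x) a) + _ * (0 * 0) = _
    rw [mul_zero, mul_zero, add_zero]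
    rfl
  have hy0 : y ≠ 0 := by
    intro h
    have : y ⬝ᵥ y = 0 := by rw [h]; simp [dotProduct]
    rw [hyy] at this
    have hxx : x ⬝ᵥ x = 0 := by
      have := mul_eq_zero.mp this
      rcases this with h' | h'
      · exact absurd h' (ne_of_gt hcpos)
      · exact h'
    exact hx0 (dotProduct_self_eq_zero.mp hxx)
  have hys : (∑ B, y B) = 0 := by
    have h1 : ∑ A : {A : Finset V // A.card = k}, (∑ a ∈ A.val, x a) * (∑ _b ∈ A.val, (1:ℝ))
        = 0 := by
      rw [lift_dot k hk x (fun _ => 1)]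
      simp only [mul_one]
      rw [hxs]
      ring
    have h2 : ∀ A : {A : Finset V // A.card = k}, (∑ _b ∈ A.val, (1:ℝ)) = (k:ℝ) := by
      intro A
      rw [Finset.sum_const, A.2, nsmul_eq_mul, mul_one]
    rw [Finset.sum_congr rfl (fun A _ => by rw [h2 A])] at h1
    rw [← Finset.sum_mul] at h1
    have hk0 : (k:ℝ) ≠ 0 := by positivity
    exact (mul_eq_zero.mp h1).resolve_right hk0
  refine ⟨y, hy0, hys, ?_⟩
  rw [hyy, hyL, mul_div_mul_left _ _ (ne_of_gt hcpos)]


lemma token_mono {V : Type*} [Fintype V] [DecidableEq V] {G G' : SimpleGraph V}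
    (h : G ≤ G') (k : ℕ) : tokenGraph G k ≤ tokenGraph G' k := by
  intro A B hAB
  obtain ⟨a, b, hab, hs⟩ := hAB
  exact ⟨a, b, h hab, hs⟩

end Aux3

/-- If `α(F_k(G)) = α(G)` for some `2 ≤ k ≤ n/2`, and adding a new edge `uv`
does not change the algebraic connectivity, then `α(F_k(G + uv)) = α(G + uv)`. -/
theorem stmt1 {V : Type*} [Fintype V] [DecidableEq V] (G : SimpleGraph V) (k : ℕ)
    (hk2 : 2 ≤ k) (hkn : 2 * k ≤ Fintype.card V)
    (htok : algConn (tokenGraph G k) = algConn G)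
    (u v : V) (hne : u ≠ v) (hadj : ¬ G.Adj u v)
    (haeq : algConn (addEdge G u v) = algConn G) :
    algConn (tokenGraph (addEdge G u v) k) = algConn (addEdge G u v) := by
  have hn4 : 4 ≤ Fintype.card V := le_trans (by omega) hkn
  set G' := addEdge G u v with hG'
  have hle : G ≤ G' := le_sup_left
  have htokle : tokenGraph G k ≤ tokenGraph G' k := token_mono hle k
  have hSG' : (RSet G').Nonempty := RSet_nonempty G' (by omega)
  have hsub : RSet G' ⊆ RSet (tokenGraph G' k) := fun t ht => lift_mem G' k hk2 hkn ht
  obtain ⟨t0, ht0⟩ := hSG'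
  have hStok' : (RSet (tokenGraph G' k)).Nonempty := ⟨t0, hsub ht0⟩
  have h1 : algConn (tokenGraph G k) ≤ algConn (tokenGraph G' k) := algConn_mono htokle hStok'
  have h2 : algConn (tokenGraph G' k) ≤ algConn G' := by
    rw [algConn_eq_RSet, algConn_eq_RSet]
    exact csInf_le_csInf (RSet_bddBelow _) ⟨t0, ht0⟩ hsub
  have h3 : algConn G' ≤ algConn (tokenGraph G' k) := by
    calc algConn G' = algConn G := haeq
    _ = algConn (tokenGraph G k) := htok.symm
    _ ≤ algConn (tokenGraph G' k) := h1
  exact le_antisymm h2 h3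
end

section
/- Let G = K(H,T) be a kite graph with head H, root v, and tail formed by s ≥ 2 paths of length r with vertices v_{i1}, …, v_{ir} (i = 1, …, s). Then for every Laplacian eigenvalue λ of G, there exists a corresponding eigenvector x of L(G) such that x_{v_{2j}} = x_{v_{3j}} = … = x_{v_{sj}} for every j with 1 ≤ j ≤ r. -/
open Matrix

attribute [local instance] Classical.propDecidable

lemma lap_apply {V : Type*} [Fintype V] (G : SimpleGraph V) (x : V → ℝ) (u : V) :
    (lapMat G *ᵥ x) u = ∑ w, if G.Adj u w then x u - x w else 0 := by
  classical
  simp only [lapMat, mulVec, dotProduct, sub_mul, ite_mul, zero_mul]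
  rw [Finset.sum_sub_distrib, Finset.sum_ite_eq]
  simp only [Finset.mem_univ, if_true]
  have h1 : ∀ w, (if G.Adj u w then x u - x w else 0)
      = (if G.Adj u w then (1:ℝ) else 0) * x u - (if G.Adj u w then (1:ℝ) else 0) * x w := by
    intro w; split_ifs <;> ring
  rw [Finset.sum_congr rfl (fun w _ => h1 w), Finset.sum_sub_distrib, ← Finset.sum_mul]
  simp [one_mul]

lemma adj_ll {W : Type*} (H : SimpleGraph W) (v : W) {s r : ℕ} (a b : W) :
    (kite H v s r).Adj (Sum.inl a) (Sum.inl b) ↔ H.Adj a b := by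
  simp only [kite, SimpleGraph.fromRel_adj]
  constructor
  · rintro ⟨hne, h | h⟩
    · exact h
    · exact h.symm
  · intro h
    exact ⟨by simpa using H.ne_of_adj h, Or.inl h⟩

lemma adj_lr {W : Type*} (H : SimpleGraph W) (v : W) {s r : ℕ} (a : W) (i : Fin s) (j : Fin r) :
    (kite H v s r).Adj (Sum.inl a) (Sum.inr (i, j)) ↔ a = v ∧ j.val = 0 := by
  simp only [kite, SimpleGraph.fromRel_adj]
  constructor
  · rintro ⟨hne, h | h⟩
    · exact h
    · exact absurd h id
  · intro h
    exact ⟨by simp, Or.inl h⟩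

lemma adj_rl {W : Type*} (H : SimpleGraph W) (v : W) {s r : ℕ} (a : W) (i : Fin s) (j : Fin r) :
    (kite H v s r).Adj (Sum.inr (i, j)) (Sum.inl a) ↔ a = v ∧ j.val = 0 := by
  rw [SimpleGraph.adj_comm]; exact adj_lr H v a i j

lemma adj_rr {W : Type*} (H : SimpleGraph W) (v : W) {s r : ℕ} (i i' : Fin s) (j j' : Fin r) :
    (kite H v s r).Adj (Sum.inr (i, j)) (Sum.inr (i', j')) ↔
      i = i' ∧ (j.val + 1 = j'.val ∨ j'.val + 1 = j.val) := by
  simp only [kite, SimpleGraph.fromRel_adj]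
  constructor
  · rintro ⟨hne, h | h⟩
    · exact ⟨h.1, Or.inl h.2⟩
    · exact ⟨h.1.symm, Or.inr h.2⟩
  · rintro ⟨rfl, h | h⟩
    · refine ⟨?_, Or.inl ⟨rfl, h⟩⟩
      simp only [ne_eq, Sum.inr.injEq, Prod.mk.injEq, not_and]
      intro _ hj; rw [Fin.ext_iff] at hj; omega
    · refine ⟨?_, Or.inr ⟨rfl, h⟩⟩
      simp only [ne_eq, Sum.inr.injEq, Prod.mk.injEq, not_and]
      intro _ hj; rw [Fin.ext_iff] at hj; omega

noncomputable def Pfun (r : ℕ) (f : Fin r → ℝ) (j : Fin r) : ℝ :=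
  ∑ j' : Fin r, if (j.val + 1 = j'.val ∨ j'.val + 1 = j.val) then f j - f j' else 0

lemma Pfun_mul (r : ℕ) (c : ℝ) (f : Fin r → ℝ) (j : Fin r) :
    Pfun r (fun j => c * f j) j = c * Pfun r f j := by
  simp only [Pfun, Finset.mul_sum]
  refine Finset.sum_congr rfl fun j' _ => ?_
  split_ifs <;> ring

lemma Pfun_sum (r : ℕ) {ι : Type*} (T : Finset ι) (f : ι → Fin r → ℝ) (j : Fin r) :
    Pfun r (fun j => ∑ m ∈ T, f m j) j = ∑ m ∈ T, Pfun r (f m) j := by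
  simp only [Pfun]
  rw [eq_comm, Finset.sum_comm]
  refine Finset.sum_congr rfl fun j' _ => ?_
  split_ifs with h
  · rw [← Finset.sum_sub_distrib]
  · simp

lemma sum_fin_zero {r : ℕ} (hr : 0 < r) (f : Fin r → ℝ) :
    (∑ j : Fin r, if j.val = 0 then f j else 0) = f ⟨0, hr⟩ := by
  have h : ∀ j : Fin r, (if j.val = 0 then f j else 0) = (if j = ⟨0, hr⟩ then f j else 0) := by
    intro j
    by_cases h : j = ⟨0, hr⟩
    · simp [h]
    · rw [if_neg h, if_neg (by simpa [Fin.ext_iff] using h)]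
  rw [Finset.sum_congr rfl (fun j _ => h j), Finset.sum_ite_eq']
  simp

lemma sum_fin_split {s : ℕ} (hs : 0 < s) (f : Fin s → ℝ) :
    (∑ i : Fin s, f i) = f ⟨0, hs⟩ + ∑ i ∈ Finset.univ.filter (fun i : Fin s => i.val ≠ 0), f i := by
  classical
  rw [← Finset.sum_filter_add_sum_filter_not Finset.univ (fun i : Fin s => i.val = 0) f]
  congr 1
  have h : Finset.univ.filter (fun i : Fin s => i.val = 0) = {⟨0, hs⟩} := by
    ext i; simp [Fin.ext_iff]
  rw [h, Finset.sum_singleton]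

lemma card_filter_ne {s : ℕ} (hs : 0 < s) :
    (Finset.univ.filter (fun i : Fin s => i.val ≠ 0)).card = s - 1 := by
  classical
  have h := Finset.card_filter_add_card_filter_not
    (s := (Finset.univ : Finset (Fin s))) (p := fun i : Fin s => i.val = 0)
  have h2 : Finset.univ.filter (fun i : Fin s => i.val = 0) = {(⟨0, hs⟩ : Fin s)} := by
    ext i; simp [Fin.ext_iff]
  rw [h2, Finset.card_singleton, Finset.card_univ, Fintype.card_fin] at h
  have h3 : (Finset.univ.filter (fun i : Fin s => ¬ i.val = 0)) =
      (Finset.univ.filter (fun i : Fin s => i.val ≠ 0)) := rfl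
  rw [h3] at h
  omega

lemma S_inr {W : Type*} [Fintype W] (H : SimpleGraph W) (v : W) {s r : ℕ}
    (x : (W ⊕ Fin s × Fin r) → ℝ) (k : Fin s) (j : Fin r) :
    (∑ w, if (kite H v s r).Adj (Sum.inr (k, j)) w then x (Sum.inr (k, j)) - x w else 0)
      = (if j.val = 0 then x (Sum.inr (k, j)) - x (Sum.inl v) else 0)
        + Pfun r (fun j' => x (Sum.inr (k, j'))) j := by
  classical
  rw [Fintype.sum_sum_type]
  congr 1
  · simp only [adj_rl]
    have h : ∀ a : W, (if a = v ∧ j.val = 0 then x (Sum.inr (k, j)) - x (Sum.inl a) else 0)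
        = if j.val = 0 then (if a = v then x (Sum.inr (k, j)) - x (Sum.inl a) else 0) else 0 := by
      intro a; by_cases h1 : j.val = 0 <;> by_cases h2 : a = v <;> simp [h1, h2]
    rw [Finset.sum_congr rfl (fun a _ => h a)]
    by_cases hj : j.val = 0
    · simp [hj]
    · simp [hj]
  · rw [Fintype.sum_prod_type]
    simp only [adj_rr]
    have h : ∀ i' : Fin s, (∑ j' : Fin r, if k = i' ∧ (j.val + 1 = j'.val ∨ j'.val + 1 = j.val)
          then x (Sum.inr (k, j)) - x (Sum.inr (i', j')) else 0)
        = if k = i' then (∑ j' : Fin r, if (j.val + 1 = j'.val ∨ j'.val + 1 = j.val)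
          then x (Sum.inr (k, j)) - x (Sum.inr (i', j')) else 0) else 0 := by
      intro i'; by_cases h1 : k = i' <;> simp [h1]
    rw [Finset.sum_congr rfl (fun i' _ => h i'), Finset.sum_ite_eq]
    simp [Pfun]

lemma S_inl {W : Type*} [Fintype W] (H : SimpleGraph W) (v : W) {s r : ℕ} (hr : 0 < r)
    (x : (W ⊕ Fin s × Fin r) → ℝ) (a : W) :
    (∑ w, if (kite H v s r).Adj (Sum.inl a) w then x (Sum.inl a) - x w else 0)
      = (∑ b, if H.Adj a b then x (Sum.inl a) - x (Sum.inl b) else 0)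
        + (if a = v then ∑ i : Fin s, (x (Sum.inl a) - x (Sum.inr (i, ⟨0, hr⟩))) else 0) := by
  classical
  rw [Fintype.sum_sum_type]
  congr 1
  · simp only [adj_ll]
  · rw [Fintype.sum_prod_type]
    simp only [adj_lr]
    by_cases ha : a = v
    · simp only [ha, true_and, if_pos rfl]
      refine Finset.sum_congr rfl fun i _ => ?_
      exact sum_fin_zero hr _
    · simp [ha]

lemma eigen_of_component {V : Type*} [Fintype V] (G : SimpleGraph V) (x : V → ℝ) (lam : ℝ)
    (h : ∀ u, (∑ w, if G.Adj u w then x u - x w else 0) = lam * x u) :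
    lapMat G *ᵥ x = lam • x := by
  funext u; rw [lap_apply, h]; simp

/-- For a kite graph `G = K(H,T)` with tail of length `r` formed by `s ≥ 2`
paths, every Laplacian eigenvalue `λ` of `G` has an eigenvector `x` which is constant on each
set `U_j = {v_{2j}, …, v_{sj}}`, `1 ≤ j ≤ r`. -/
theorem stmt10 {W : Type*} [Fintype W] [DecidableEq W] (H : SimpleGraph W)
    (hH : H.Connected) (v : W) (s r : ℕ) (hs : 2 ≤ s) (hr : 1 ≤ r)
    (lam : ℝ)
    (hlam : ∃ x : (W ⊕ Fin s × Fin r) → ℝ, x ≠ 0 ∧ lapMat (kite H v s r) *ᵥ x = lam • x) :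
    ∃ x : (W ⊕ Fin s × Fin r) → ℝ, x ≠ 0 ∧ lapMat (kite H v s r) *ᵥ x = lam • x ∧
      ∀ j : Fin r, ∀ i i' : Fin s, i.val ≠ 0 → i'.val ≠ 0 →
        x (Sum.inr (i, j)) = x (Sum.inr (i', j)) := by
  classical
  obtain ⟨x, hx0, hx⟩ := hlam
  have hr' : 0 < r := hr
  have hs' : 0 < s := by omega
  set T : Finset (Fin s) := Finset.univ.filter (fun i : Fin s => i.val ≠ 0) with hT
  set q : ℝ := (s : ℝ) - 1 with hq
  have hcard : (T.card : ℝ) = q := by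
    rw [hT, card_filter_ne hs', hq]
    have : (1:ℕ) ≤ s := by omega
    push_cast [Nat.cast_sub this]
    ring
  have hqne : q ≠ 0 := by
    rw [hq]
    have : (2:ℝ) ≤ (s:ℝ) := by exact_mod_cast hs
    linarith
  have hinv : q⁻¹ * q = 1 := inv_mul_cancel₀ hqne
  have hxE : ∀ u, (∑ w, if (kite H v s r).Adj u w then x u - x w else 0) = lam * x u := by
    intro u
    have h := congrFun hx u
    rw [lap_apply] at h
    simpa using h
  set A : Fin r → ℝ := fun j => ∑ i ∈ T, x (Sum.inr (i, j)) with hA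
  set y : (W ⊕ Fin s × Fin r) → ℝ :=
    Sum.elim (fun a => x (Sum.inl a))
      (fun p => if p.1.val = 0 then x (Sum.inr p) else q⁻¹ * A p.2) with hy
  have hyl : ∀ a, y (Sum.inl a) = x (Sum.inl a) := fun a => rfl
  have hyr0 : ∀ (i : Fin s) (j : Fin r), i.val = 0 → y (Sum.inr (i, j)) = x (Sum.inr (i, j)) := by
    intro i j h; simp [hy, h]
  have hyr : ∀ (i : Fin s) (j : Fin r), i.val ≠ 0 → y (Sum.inr (i, j)) = q⁻¹ * A j := by
    intro i j h; simp [hy, h]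
  by_cases hy0 : y = 0
  · -- Case B: x vanishes on W and the first path
    have hxl : ∀ a, x (Sum.inl a) = 0 := by
      intro a; rw [← hyl a, hy0]; rfl
    have hx00 : ∀ (i : Fin s) (j : Fin r), i.val = 0 → x (Sum.inr (i, j)) = 0 := by
      intro i j h; rw [← hyr0 i j h, hy0]; rfl
    have hwit : ∃ p : Fin s × Fin r, x (Sum.inr p) ≠ 0 ∧ p.1.val ≠ 0 := by
      by_contra hcon
      push_neg at hcon
      apply hx0
      funext u
      cases u with
      | inl a => exact hxl a
      | inr p =>
        by_cases hp : p.1.val = 0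
        · show x (Sum.inr p) = 0
          exact hx00 p.1 p.2 hp
        · show x (Sum.inr p) = 0
          by_contra hne
          exact hp (hcon p hne)
    obtain ⟨⟨k, jst⟩, hkx, hk⟩ := hwit
    set g : Fin r → ℝ := fun j => x (Sum.inr (k, j)) with hg
    set z : (W ⊕ Fin s × Fin r) → ℝ :=
      Sum.elim (fun _ : W => (0:ℝ))
        (fun p : Fin s × Fin r => if p.1.val = 0 then -q * g p.2 else g p.2) with hz
    have hzl : ∀ a, z (Sum.inl a) = 0 := fun a => rfl
    have hzr0 : ∀ (i : Fin s) (j : Fin r), i.val = 0 → z (Sum.inr (i, j)) = -q * g j := by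
      intro i j h; simp [hz, h]
    have hzr : ∀ (i : Fin s) (j : Fin r), i.val ≠ 0 → z (Sum.inr (i, j)) = g j := by
      intro i j h; simp [hz, h]
    have hPg : ∀ j : Fin r, Pfun r g j = lam * g j - (if j.val = 0 then g j else 0) := by
      intro j
      have h1 := hxE (Sum.inr (k, j))
      rw [S_inr] at h1
      rw [hxl v] at h1
      have hgf : (fun j' => x (Sum.inr (k, j'))) = g := rfl
      rw [hgf] at h1
      by_cases hj : j.val = 0
      · rw [if_pos hj] at h1
        rw [if_pos hj]
        linarith
      · rw [if_neg hj] at h1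
        rw [if_neg hj]
        linarith
    refine ⟨z, ?_, ?_, ?_⟩
    · intro hcon
      apply hkx
      have := congrFun hcon (Sum.inr (k, jst))
      rw [hzr k jst hk] at this
      exact this
    · apply eigen_of_component
      intro u
      cases u with
      | inl a =>
        rw [S_inl H v hr']
        have e1 : (∑ b, if H.Adj a b then z (Sum.inl a) - z (Sum.inl b) else 0) = 0 := by
          apply Finset.sum_eq_zero; intro b _
          rw [hzl, hzl]; simp
        rw [e1, hzl]
        by_cases ha : a = v
        · rw [if_pos ha]
          have e2 : (∑ i : Fin s, ((0:ℝ) - z (Sum.inr (i, ⟨0, hr'⟩)))) = 0 := by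
            rw [sum_fin_split hs' (fun i => (0:ℝ) - z (Sum.inr (i, ⟨0, hr'⟩)))]
            rw [hzr0 ⟨0, hs'⟩ ⟨0, hr'⟩ rfl]
            have e3 : (∑ i ∈ T, ((0:ℝ) - z (Sum.inr (i, ⟨0, hr'⟩))))
                = ∑ i ∈ T, (-(g ⟨0, hr'⟩)) := by
              refine Finset.sum_congr rfl fun i hi => ?_
              rw [hT] at hi
              rw [hzr i ⟨0, hr'⟩ (Finset.mem_filter.mp hi).2]
              ring
            rw [e3, Finset.sum_const, nsmul_eq_mul, hcard]
            ring
          rw [e2]; ring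
        · rw [if_neg ha]; ring
      | inr p =>
        obtain ⟨i, j⟩ := p
        rw [S_inr, hzl]
        by_cases hi : i.val = 0
        · have hf : (fun j' => z (Sum.inr (i, j'))) = fun j' => -q * g j' := by
            funext j'; exact hzr0 i j' hi
          rw [hf, hzr0 i j hi, Pfun_mul, hPg j]
          split_ifs <;> ring
        · have hf : (fun j' => z (Sum.inr (i, j'))) = fun j' => 1 * g j' := by
            funext j'; rw [hzr i j' hi]; ring
          rw [hf, hzr i j hi, Pfun_mul, hPg j]
          split_ifs <;> ring
    · intro j i i' hi hi'
      rw [hzr i j hi, hzr i' j hi']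
  · -- Case A: the averaged vector y works
    have hysum : ∀ j : Fin r, (∑ i : Fin s, y (Sum.inr (i, j))) = ∑ i : Fin s, x (Sum.inr (i, j)) := by
      intro j
      rw [sum_fin_split hs' (fun i => y (Sum.inr (i, j))),
          sum_fin_split hs' (fun i => x (Sum.inr (i, j))), hyr0 ⟨0, hs'⟩ j rfl]
      congr 1
      · have e1 : (∑ i ∈ T, y (Sum.inr (i, j))) = ∑ i ∈ T, q⁻¹ * A j := by
          refine Finset.sum_congr rfl fun i hi => ?_
          rw [hT] at hi
          exact hyr i j (Finset.mem_filter.mp hi).2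
        have e2 : (∑ i ∈ Finset.univ.filter (fun i : Fin s => i.val ≠ 0),
            x (Sum.inr (i, j))) = A j := rfl
        rw [e1, Finset.sum_const, nsmul_eq_mul, hcard, e2]
        field_simp
    refine ⟨y, hy0, ?_, ?_⟩
    · apply eigen_of_component
      intro u
      cases u with
      | inl a =>
        have h1 := hxE (Sum.inl a)
        rw [S_inl H v hr'] at h1 ⊢
        have e1 : (∑ b, if H.Adj a b then y (Sum.inl a) - y (Sum.inl b) else 0)
            = ∑ b, if H.Adj a b then x (Sum.inl a) - x (Sum.inl b) else 0 := by
          refine Finset.sum_congr rfl fun b _ => ?_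
          rw [hyl, hyl]
        rw [e1]
        by_cases ha : a = v
        · rw [if_pos ha] at h1 ⊢
          have e2 : (∑ i : Fin s, (y (Sum.inl a) - y (Sum.inr (i, ⟨0, hr'⟩))))
              = ∑ i : Fin s, (x (Sum.inl a) - x (Sum.inr (i, ⟨0, hr'⟩))) := by
            rw [Finset.sum_sub_distrib, Finset.sum_sub_distrib, hysum, hyl]
          rw [e2, hyl]
          exact h1
        · rw [if_neg ha] at h1 ⊢
          rw [hyl]
          exact h1
      | inr p =>
        obtain ⟨i, j⟩ := p
        rw [S_inr, hyl]
        by_cases hi : i.val = 0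
        · have hf : (fun j' => y (Sum.inr (i, j'))) = fun j' => x (Sum.inr (i, j')) := by
            funext j'; exact hyr0 i j' hi
          rw [hf, hyr0 i j hi]
          have h1 := hxE (Sum.inr (i, j))
          rw [S_inr] at h1
          exact h1
        · have hf : (fun j' => y (Sum.inr (i, j'))) = fun j' => q⁻¹ * A j' := by
            funext j'; exact hyr i j' hi
          rw [hf, hyr i j hi, Pfun_mul]
          -- summed equation over T
          have hsum : (∑ m ∈ T, ((if j.val = 0 then x (Sum.inr (m, j)) - x (Sum.inl v) else 0)
                + Pfun r (fun j' => x (Sum.inr (m, j'))) j))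
              = ∑ m ∈ T, lam * x (Sum.inr (m, j)) := by
            refine Finset.sum_congr rfl fun m _ => ?_
            have h1 := hxE (Sum.inr (m, j))
            rw [S_inr] at h1
            exact h1
          have hAj : A j = ∑ i ∈ T, x (Sum.inr (i, j)) := rfl
          rw [Finset.sum_add_distrib, ← Pfun_sum, ← hA, ← Finset.mul_sum, ← hAj] at hsum
          by_cases hj : j.val = 0
          · simp only [if_pos hj] at hsum ⊢
            rw [Finset.sum_sub_distrib, Finset.sum_const, nsmul_eq_mul, hcard, ← hAj] at hsum
            linear_combination q⁻¹ * hsum + (x (Sum.inl v)) * hinv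
          · simp only [if_neg hj] at hsum ⊢
            rw [Finset.sum_const_zero, zero_add] at hsum
            rw [hsum]
            ring
    · intro j i i' hi hi'
      rw [hyr i j hi, hyr i' j hi']
end
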